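/- Suppose for every m and every continuous m-homogeneous polynomial P : c₀ → ℂ the inequality (Σ_{α∈Λ_M}|c_α(P)|^{2M/(M+1)})^{(M+1)/(2M)} ≤ D_m ‖P‖ holds with D_m = C(m+M-1,m)^{(M+1)/(2M)} · (m!/(⌊m/M⌋!)^M) · C_M · e^m. Then, combining with (Σ_{α∈Λ_M}|c_α(P)|²)^{1/2} ≤ ‖P‖ and ℓ^p interpolation with θ = M/m, one obtains (Σ_{α∈Λ_M}|c_α(P)|^{2m/(m+1)})^{(m+1)/(2m)} ≤ D_m^{M/m} ‖P‖, and D_m^{M/m} is bounded uniformly in m. -/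

import Mathlib

private lemma my_choose_le_two_pow (n k : ℕ) : n.choose k ≤ 2 ^ n := by
  rcases le_or_gt k n with h | h
  · calc n.choose k ≤ ∑ i ∈ Finset.range (n + 1), n.choose i :=
        Finset.single_le_sum (fun i _ => Nat.zero_le _)
          (Finset.mem_range.2 (Nat.lt_succ_of_le h))
    _ = 2 ^ n := Nat.sum_range_choose n
  · simp [Nat.choose_eq_zero_of_lt h]

private lemma my_fact_le (n k : ℕ) (h : k ≤ n) :
    n.factorial ≤ k.factorial * (n - k).factorial * 2 ^ n := by
  have key := Nat.choose_mul_factorial_mul_factorial h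
  calc n.factorial = n.choose k * k.factorial * (n - k).factorial := key.symm
    _ ≤ 2 ^ n * k.factorial * (n - k).factorial := by
        gcongr
        exact my_choose_le_two_pow n k
    _ = k.factorial * (n - k).factorial * 2 ^ n := by ring

private lemma my_peel (k : ℕ) : ∀ j n : ℕ, j * k ≤ n →
    n.factorial ≤ k.factorial ^ j * (n - j * k).factorial * 2 ^ (n * j) := by
  intro j
  induction j with
  | zero => intro n _; simp
  | succ j ih =>
    intro n h
    have hsk : (j + 1) * k = j * k + k := by ring
    rw [hsk] at h
    have h1 : j * k ≤ n := by omega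
    have h2 : k ≤ n - j * k := by omega
    have h3 : n - j * k - k = n - (j + 1) * k := by rw [hsk]; omega
    calc n.factorial ≤ k.factorial ^ j * (n - j * k).factorial * 2 ^ (n * j) := ih n h1
      _ ≤ k.factorial ^ j * (k.factorial * (n - j * k - k).factorial * 2 ^ (n - j * k))
            * 2 ^ (n * j) := by
          gcongr
          exact my_fact_le _ _ h2
      _ ≤ k.factorial ^ j * (k.factorial * (n - (j + 1) * k).factorial * 2 ^ n)
            * 2 ^ (n * j) := by
          rw [h3]
          gcongr
          · exact one_le_two
          · omega
      _ = k.factorial ^ (j + 1) * (n - (j + 1) * k).factorial * 2 ^ (n * (j + 1)) := by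
          rw [pow_succ, Nat.mul_succ, pow_add]; ring

private lemma my_fact_bound (M m : ℕ) (hM : 0 < M) :
    m.factorial ≤ (m / M).factorial ^ M * M.factorial * 2 ^ (m * M) := by
  have h1 : M * (m / M) ≤ m := Nat.mul_div_le m M
  have key := my_peel (m / M) M m h1
  have h2 : m - M * (m / M) = m % M := by
    have := Nat.div_add_mod m M
    omega
  have h3 : (m % M).factorial ≤ M.factorial :=
    Nat.factorial_le (le_of_lt (Nat.mod_lt m hM))
  calc m.factorial ≤ (m / M).factorial ^ M * (m - M * (m / M)).factorial * 2 ^ (m * M) := key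
    _ ≤ (m / M).factorial ^ M * M.factorial * 2 ^ (m * M) := by
        rw [h2]; gcongr

/-- Let `D m = C(m+M-1,m)^((M+1)/(2M)) · (m!/(⌊m/M⌋!)^M) · C_M · e^m`. If for an
`m`-homogeneous polynomial `P` on `c₀` (modelled as a multivariate polynomial), with
`Λ_M` the multi-indices with at most `M` nonzero entries and `N` a bound playing the
role of `‖P‖`, the `2M/(M+1)`-estimate with constant `D m` and the ℓ²-estimate hold,
then ℓ^p interpolation with `θ = M/m` yields the `2m/(m+1)`-estimate with constant
`D m ^ (M/m)`, and `D m ^ (M/m)` is bounded uniformly in `m`. -/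
theorem stmt15 (M : ℕ) (hM : 0 < M) (C : ℝ) (hC : 1 ≤ C) (D : ℕ → ℝ)
    (hD : ∀ m : ℕ, D m =
      (((m + M - 1).choose m : ℝ)) ^ (((M : ℝ) + 1) / (2 * (M : ℝ))) *
        ((m.factorial : ℝ) / ((m / M).factorial : ℝ) ^ M) * C * Real.exp 1 ^ m) :
    (∀ m : ℕ, M ≤ m → ∀ P : MvPolynomial ℕ ℂ, P.IsHomogeneous m → ∀ N : ℝ, 0 ≤ N →
      (∑ α ∈ P.support.filter (fun α => α.support.card ≤ M),
          ‖P.coeff α‖ ^ (2 * (M : ℝ) / ((M : ℝ) + 1))) ^ (((M : ℝ) + 1) / (2 * (M : ℝ)))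
        ≤ D m * N →
      (∑ α ∈ P.support.filter (fun α => α.support.card ≤ M),
          ‖P.coeff α‖ ^ (2 : ℝ)) ^ ((1 : ℝ) / 2) ≤ N →
      (∑ α ∈ P.support.filter (fun α => α.support.card ≤ M),
          ‖P.coeff α‖ ^ (2 * (m : ℝ) / ((m : ℝ) + 1))) ^ (((m : ℝ) + 1) / (2 * (m : ℝ)))
        ≤ D m ^ ((M : ℝ) / (m : ℝ)) * N) ∧
    ∃ B : ℝ, ∀ m : ℕ, M ≤ m → D m ^ ((M : ℝ) / (m : ℝ)) ≤ B := by
  have hMR : (0:ℝ) < (M:ℝ) := by exact_mod_cast hM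
  have hexp1 : (1:ℝ) ≤ Real.exp 1 := by
    have := Real.one_le_exp (le_refl (0:ℝ))
    nlinarith [Real.add_one_le_exp (1:ℝ)]
  constructor
  · -- interpolation
    intro m hm P _hP N hN h1 h2
    have hmR : (0:ℝ) < (m:ℝ) := by exact_mod_cast lt_of_lt_of_le hM hm
    rcases eq_or_lt_of_le hm with heq | hlt
    · subst heq
      rw [div_self (ne_of_gt hMR), Real.rpow_one]
      exact h1
    · set s := P.support.filter (fun α => α.support.card ≤ M) with hsdef
      set a : (ℕ →₀ ℕ) → ℝ := fun α => ‖P.coeff α‖ with hadef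
      have hmM : (M:ℝ) < (m:ℝ) := by exact_mod_cast hlt
      have hm1 : (0:ℝ) < (m:ℝ) + 1 := by linarith
      have hM1 : (0:ℝ) < (M:ℝ) + 1 := by linarith
      have hmMp : (0:ℝ) < (m:ℝ) - (M:ℝ) := by linarith
      have hm1' : ((m:ℝ) + 1) ≠ 0 := ne_of_gt hm1
      have hM1' : ((M:ℝ) + 1) ≠ 0 := ne_of_gt hM1
      have hmMp' : ((m:ℝ) - (M:ℝ)) ≠ 0 := ne_of_gt hmMp
      have hmne : (m:ℝ) ≠ 0 := ne_of_gt hmR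
      have hMne : (M:ℝ) ≠ 0 := ne_of_gt hMR
      set c1 : ℝ := 2 * (M:ℝ) / ((m:ℝ) + 1) with hc1def
      set c2 : ℝ := 2 * ((m:ℝ) - (M:ℝ)) / ((m:ℝ) + 1) with hc2def
      set u : ℝ := ((m:ℝ) + 1) / ((M:ℝ) + 1) with hudef
      set v : ℝ := ((m:ℝ) + 1) / ((m:ℝ) - (M:ℝ)) with hvdef
      have hconj : Real.HolderConjugate u v := by
        constructor
        · rw [hudef, hvdef, inv_one]
          field_simp
          ring
        · rw [hudef]; positivity
        · rw [hvdef]; exact div_pos hm1 hmMp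
      have hold := Real.inner_le_Lp_mul_Lq_of_nonneg (s := s)
        (f := fun α => a α ^ c1) (g := fun α => a α ^ c2) hconj
        (fun i _ => Real.rpow_nonneg (norm_nonneg _) _)
        (fun i _ => Real.rpow_nonneg (norm_nonneg _) _)
      have e1 : ∀ α, a α ^ c1 * a α ^ c2 = a α ^ (2 * (m:ℝ) / ((m:ℝ) + 1)) := by
        intro α
        have hce : c1 + c2 = 2 * (m:ℝ) / ((m:ℝ) + 1) := by
          rw [hc1def, hc2def]; field_simp; ring
        rw [← Real.rpow_add' (norm_nonneg _) (by rw [hce]; positivity), hce]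
      have e2 : ∀ α, (a α ^ c1) ^ u = a α ^ (2 * (M:ℝ) / ((M:ℝ) + 1)) := by
        intro α
        rw [← Real.rpow_mul (norm_nonneg _)]
        congr 1
        rw [hc1def, hudef]
        field_simp
        try ring
      have e3 : ∀ α, (a α ^ c2) ^ v = a α ^ (2:ℝ) := by
        intro α
        rw [← Real.rpow_mul (norm_nonneg _)]
        congr 1
        rw [hc2def, hvdef]
        field_simp
      simp only [e1, e2, e3] at hold
      set S0 : ℝ := ∑ α ∈ s, a α ^ (2 * (M:ℝ) / ((M:ℝ) + 1)) with hS0def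
      set S1 : ℝ := ∑ α ∈ s, a α ^ (2:ℝ) with hS1def
      set Sp : ℝ := ∑ α ∈ s, a α ^ (2 * (m:ℝ) / ((m:ℝ) + 1)) with hSpdef
      have hS0n : 0 ≤ S0 := Finset.sum_nonneg fun i _ => Real.rpow_nonneg (norm_nonneg _) _
      have hS1n : 0 ≤ S1 := Finset.sum_nonneg fun i _ => Real.rpow_nonneg (norm_nonneg _) _
      have hSpn : 0 ≤ Sp := Finset.sum_nonneg fun i _ => Real.rpow_nonneg (norm_nonneg _) _
      have hDnn : 0 ≤ D m := by rw [hD]; positivity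
      have he : (0:ℝ) ≤ ((m:ℝ) + 1) / (2 * (m:ℝ)) := by positivity
      have hθ : (0:ℝ) ≤ (M:ℝ) / (m:ℝ) := by positivity
      calc Sp ^ (((m:ℝ) + 1) / (2 * (m:ℝ)))
          ≤ (S0 ^ (1/u) * S1 ^ (1/v)) ^ (((m:ℝ) + 1) / (2 * (m:ℝ))) :=
            Real.rpow_le_rpow hSpn hold he
        _ = (S0 ^ (1/u)) ^ (((m:ℝ) + 1) / (2 * (m:ℝ))) *
              (S1 ^ (1/v)) ^ (((m:ℝ) + 1) / (2 * (m:ℝ))) :=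
            Real.mul_rpow (Real.rpow_nonneg hS0n _) (Real.rpow_nonneg hS1n _)
        _ = (S0 ^ (((M:ℝ) + 1) / (2 * (M:ℝ)))) ^ ((M:ℝ) / (m:ℝ)) *
              (S1 ^ ((1:ℝ)/2)) ^ (((m:ℝ) - (M:ℝ)) / (m:ℝ)) := by
            rw [← Real.rpow_mul hS0n, ← Real.rpow_mul hS1n,
              ← Real.rpow_mul hS0n, ← Real.rpow_mul hS1n]
            congr 1
            · congr 1
              rw [hudef]
              field_simp
              try ring
            · congr 1
              rw [hvdef]
              field_simp
              try ring
        _ ≤ (D m * N) ^ ((M:ℝ) / (m:ℝ)) * N ^ (((m:ℝ) - (M:ℝ)) / (m:ℝ)) := by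
            have hb1 := Real.rpow_le_rpow (Real.rpow_nonneg hS0n _) h1 hθ
            have hb2 := Real.rpow_le_rpow (Real.rpow_nonneg hS1n _) h2
              (by positivity : (0:ℝ) ≤ ((m:ℝ) - (M:ℝ)) / (m:ℝ))
            exact mul_le_mul hb1 hb2 (Real.rpow_nonneg (Real.rpow_nonneg hS1n _) _)
              (Real.rpow_nonneg (by positivity) _)
        _ = D m ^ ((M:ℝ) / (m:ℝ)) * N := by
            rw [Real.mul_rpow hDnn hN, mul_assoc,
              ← Real.rpow_add' hN (by
                have : (M:ℝ) / (m:ℝ) + ((m:ℝ) - (M:ℝ)) / (m:ℝ) = 1 := by field_simp; ring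
                rw [this]; exact one_ne_zero)]
            congr 1
            have : (M:ℝ) / (m:ℝ) + ((m:ℝ) - (M:ℝ)) / (m:ℝ) = 1 := by field_simp; ring
            rw [this, Real.rpow_one]
  · refine ⟨((2:ℝ)^M * (M.factorial:ℝ) * C) * ((2 * (2:ℝ)^M * Real.exp 1) ^ M), ?_⟩
    intro m hm
    have hmR : (0:ℝ) < (m:ℝ) := by exact_mod_cast lt_of_lt_of_le hM hm
    set K : ℝ := (2:ℝ)^M * (M.factorial:ℝ) * C with hKdef
    set A : ℝ := 2 * (2:ℝ)^M * Real.exp 1 with hAdef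
    have h2M : (1:ℝ) ≤ (2:ℝ)^M := one_le_pow₀ one_le_two
    have hMfact : (1:ℝ) ≤ (M.factorial : ℝ) := by
      exact_mod_cast Nat.one_le_iff_ne_zero.2 M.factorial_ne_zero
    have hK1 : 1 ≤ K := by
      rw [hKdef]
      calc (1:ℝ) = 1 * 1 * 1 := by norm_num
        _ ≤ (2:ℝ)^M * (M.factorial:ℝ) * C := by
            gcongr <;> first | assumption | norm_num
    have hA1 : 1 ≤ A := by
      rw [hAdef]
      calc (1:ℝ) = 1 * 1 * 1 := by norm_num
        _ ≤ 2 * (2:ℝ)^M * Real.exp 1 := by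
            gcongr <;> first | assumption | norm_num
    have hA0 : (0:ℝ) ≤ A := le_trans zero_le_one hA1
    have hDnn : 0 ≤ D m := by rw [hD]; positivity
    -- first factor bound
    have hch1 : (1:ℝ) ≤ (((m + M - 1).choose m : ℕ) : ℝ) := by
      have : 0 < (m + M - 1).choose m := Nat.choose_pos (by omega)
      exact_mod_cast this
    have he01 : ((M:ℝ) + 1) / (2 * (M:ℝ)) ≤ 1 := by
      rw [div_le_one (by positivity)]
      have : (1:ℝ) ≤ (M:ℝ) := by exact_mod_cast hM
      linarith
    have hchpow : ((m + M - 1).choose m : ℕ) ≤ 2 ^ (m + M) := by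
      calc ((m + M - 1).choose m : ℕ) ≤ 2 ^ (m + M - 1) := my_choose_le_two_pow _ _
        _ ≤ 2 ^ (m + M) := Nat.pow_le_pow_right (by norm_num) (by omega)
    have hf1 : (((m + M - 1).choose m : ℕ) : ℝ) ^ (((M:ℝ) + 1) / (2 * (M:ℝ)))
        ≤ (2:ℝ)^M * (2:ℝ)^m := by
      calc (((m + M - 1).choose m : ℕ) : ℝ) ^ (((M:ℝ) + 1) / (2 * (M:ℝ)))
          ≤ (((m + M - 1).choose m : ℕ) : ℝ) ^ (1:ℝ) :=
            Real.rpow_le_rpow_of_exponent_le hch1 he01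
        _ = (((m + M - 1).choose m : ℕ) : ℝ) := Real.rpow_one _
        _ ≤ (2:ℝ) ^ (m + M) := by exact_mod_cast hchpow
        _ = (2:ℝ)^M * (2:ℝ)^m := by rw [pow_add]; ring
    -- second factor bound
    have hf2 : (m.factorial : ℝ) / ((m / M).factorial : ℝ) ^ M
        ≤ (M.factorial : ℝ) * (2:ℝ) ^ (m * M) := by
      rw [div_le_iff₀ (by positivity)]
      have := my_fact_bound M m hM
      calc (m.factorial : ℝ) ≤ ((m / M).factorial ^ M * M.factorial * 2 ^ (m * M) : ℕ) := by
            exact_mod_cast this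
        _ = (M.factorial : ℝ) * (2:ℝ) ^ (m * M) * ((m / M).factorial : ℝ) ^ M := by
            push_cast; ring
    have hDm : D m ≤ K * A ^ m := by
      rw [hD m]
      calc (((m + M - 1).choose m : ℕ) : ℝ) ^ (((M:ℝ) + 1) / (2 * (M:ℝ))) *
            ((m.factorial : ℝ) / ((m / M).factorial : ℝ) ^ M) * C * Real.exp 1 ^ m
          ≤ ((2:ℝ)^M * (2:ℝ)^m) * ((M.factorial : ℝ) * (2:ℝ) ^ (m * M)) * C *
              Real.exp 1 ^ m := by
            apply mul_le_mul_of_nonneg_right _ (by positivity : (0:ℝ) ≤ Real.exp 1 ^ m)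
            apply mul_le_mul_of_nonneg_right _ (by linarith : (0:ℝ) ≤ C)
            exact mul_le_mul hf1 hf2 (by positivity) (by positivity)
        _ = K * A ^ m := by
            rw [hKdef, hAdef, mul_pow, mul_pow, ← pow_mul]
            ring
    have hθ1 : (M:ℝ) / (m:ℝ) ≤ 1 := by
      rw [div_le_one hmR]
      exact_mod_cast hm
    calc D m ^ ((M:ℝ) / (m:ℝ)) ≤ (K * A ^ m) ^ ((M:ℝ) / (m:ℝ)) :=
          Real.rpow_le_rpow hDnn hDm (by positivity)
      _ = K ^ ((M:ℝ) / (m:ℝ)) * (A ^ m) ^ ((M:ℝ) / (m:ℝ)) :=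
          Real.mul_rpow (by positivity) (by positivity)
      _ = K ^ ((M:ℝ) / (m:ℝ)) * A ^ M := by
          rw [← Real.rpow_natCast A m, ← Real.rpow_mul hA0,
            show (m:ℝ) * ((M:ℝ) / (m:ℝ)) = (M:ℝ) by field_simp,
            Real.rpow_natCast]
      _ ≤ K ^ (1:ℝ) * A ^ M :=
          mul_le_mul_of_nonneg_right (Real.rpow_le_rpow_of_exponent_le hK1 hθ1)
            (by positivity)
      _ = K * A ^ M := by rw [Real.rpow_one]
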